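/- Every frame in an infinite-dimensional Hilbert space whose elements are all nonzero contains, for every ε > 0, a subsequence (x_{j_k}) such that the normalized vectors z_k = x_{j_k}/‖x_{j_k}‖ satisfy (1−ε)(∑_k |c_k|²)^{1/2} ≤ ‖∑_k c_k z_k‖ ≤ (1+ε)(∑_k |c_k|²)^{1/2} for all finitely supported scalars (c_k). -/

import Mathlib

set_option maxHeartbeats 1000000

open scoped RealInnerProductSpace

lemma frame_aux_summable
    {H : Type*} [NormedAddCommGroup H] [InnerProductSpace ℝ H]
    (x : ℕ → H) (A : ℝ) (hA : 0 < A)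
    (hlow : ∀ v : H, A * ‖v‖ ^ 2 ≤ ∑' j, ⟪v, x j⟫ ^ 2) (v : H) :
    Summable (fun j => ⟪v, x j⟫ ^ 2) := by
  by_contra hs
  have h0 : ∑' j, ⟪v, x j⟫ ^ 2 = 0 := tsum_eq_zero_of_not_summable hs
  have h1 := hlow v
  rw [h0] at h1
  have hv : v = 0 := by
    have h2 : ‖v‖ ^ 2 ≤ 0 := by nlinarith
    have h3 : ‖v‖ = 0 := by nlinarith [norm_nonneg v]
    simpa using h3
  apply hs
  subst hv
  simpa using summable_zero

lemma frame_aux_key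
    {H : Type*} [NormedAddCommGroup H] [InnerProductSpace ℝ H] [CompleteSpace H]
    (hinf : ¬ FiniteDimensional ℝ H)
    (x : ℕ → H) (A B : ℝ) (hA : 0 < A)
    (hframe : ∀ v : H,
      A * ‖v‖ ^ 2 ≤ ∑' j, ⟪v, x j⟫ ^ 2 ∧ ∑' j, ⟪v, x j⟫ ^ 2 ≤ B * ‖v‖ ^ 2)
    (e : ℕ → H) (k N : ℕ) (η : ℝ) (hη : 0 < η) :
    ∃ j, N ≤ j ∧ ∑ i ∈ Finset.range k, ⟪e i, x j⟫ ^ 2 ≤ η * ‖x j‖ ^ 2 := by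
  by_contra hcon
  push_neg at hcon
  have hsum : ∀ v : H, Summable (fun j => ⟪v, x j⟫ ^ 2) :=
    frame_aux_summable x A hA (fun v => (hframe v).1)
  set g : ℕ → ℝ := fun j => ∑ i ∈ Finset.range k, ⟪e i, x j⟫ ^ 2 with hg
  have hgsum : Summable g := summable_sum (fun i _ => hsum (e i))
  set h : ℕ → ℝ := fun j => if N ≤ j then ‖x j‖ ^ 2 else 0 with hh
  have hhsum : Summable h := by
    refine Summable.of_nonneg_of_le (fun j => ?_) (fun j => ?_) (hgsum.mul_left η⁻¹)
    · by_cases hj : N ≤ j <;> simp [hh, hj] <;> positivity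
    · by_cases hj : N ≤ j
      · simp only [hh, if_pos hj]
        have h4 := (hcon j hj).le
        rw [← le_div_iff₀' hη] at h4
        calc ‖x j‖ ^ 2 ≤ g j / η := h4
        _ = η⁻¹ * g j := by ring
      · simp only [hh, if_neg hj]
        have h5 : 0 ≤ g j := Finset.sum_nonneg (fun i _ => sq_nonneg _)
        positivity
  have htail : Filter.Tendsto (fun n => ∑' j, h (j + n)) Filter.atTop (nhds 0) :=
    tendsto_sum_nat_add h
  have hev : ∀ᶠ n in Filter.atTop, (∑' j, h (j + n)) < A :=
    htail.eventually (eventually_lt_nhds hA)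
  obtain ⟨M, hMN, hM⟩ : ∃ M, N ≤ M ∧ (∑' j, h (j + M)) < A := by
    obtain ⟨M0, hM0⟩ := Filter.eventually_atTop.mp hev
    exact ⟨max N M0, le_max_left _ _, hM0 _ (le_max_right _ _)⟩
  -- pick a unit vector orthogonal to x 0, ..., x (M-1)
  set K : Submodule ℝ H := Submodule.span ℝ (x '' Set.Iio M) with hK
  have hKfin : FiniteDimensional ℝ K :=
    FiniteDimensional.span_of_finite ℝ ((Set.finite_Iio M).image x)
  have hKne : K ≠ ⊤ := by
    intro htop
    have : FiniteDimensional ℝ (⊤ : Submodule ℝ H) := htop ▸ hKfin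
    exact hinf (Submodule.topEquiv.finiteDimensional)
  have hKbot : Kᗮ ≠ ⊥ := fun hb => hKne (Submodule.orthogonal_eq_bot_iff.mp hb)
  obtain ⟨v0, hv0K, hv0⟩ := Submodule.exists_mem_ne_zero_of_ne_bot hKbot
  set v : H := ‖v0‖⁻¹ • v0 with hv
  have hvn : ‖v‖ = 1 := by
    rw [hv, norm_smul, norm_inv, norm_norm]
    exact inv_mul_cancel₀ (norm_ne_zero_iff.mpr hv0)
  have hvK : v ∈ Kᗮ := Submodule.smul_mem _ _ hv0K
  have hvorth : ∀ j < M, ⟪v, x j⟫ = 0 := by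
    intro j hj
    have hxK : x j ∈ K := Submodule.subset_span ⟨j, hj, rfl⟩
    have := (Submodule.mem_orthogonal K v).mp hvK (x j) hxK
    rw [real_inner_comm] at this
    exact this
  -- derive the contradiction
  have hA1 : A ≤ ∑' j, ⟪v, x j⟫ ^ 2 := by
    have := (hframe v).1
    rwa [hvn, one_pow, mul_one] at this
  have hsumv := hsum v
  have hsplit : (∑ j ∈ Finset.range M, ⟪v, x j⟫ ^ 2) + ∑' j, ⟪v, x (j + M)⟫ ^ 2
      = ∑' j, ⟪v, x j⟫ ^ 2 := Summable.sum_add_tsum_nat_add M hsumv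
  have hzero : (∑ j ∈ Finset.range M, ⟪v, x j⟫ ^ 2) = 0 := by
    apply Finset.sum_eq_zero
    intro j hj
    rw [hvorth j (Finset.mem_range.mp hj)]
    ring
  have hle2 : ∑' j, ⟪v, x (j + M)⟫ ^ 2 ≤ ∑' j, h (j + M) := by
    have hs1 : Summable (fun j => ⟪v, x (j + M)⟫ ^ 2) := (summable_nat_add_iff M).mpr hsumv
    have hs2 : Summable (fun j => h (j + M)) := (summable_nat_add_iff M).mpr hhsum
    refine Summable.tsum_le_tsum (fun j => ?_) hs1 hs2
    have hjM : N ≤ j + M := le_trans hMN (Nat.le_add_left M j)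
    have hcs : |⟪v, x (j + M)⟫| ≤ ‖x (j + M)‖ := by
      have := abs_real_inner_le_norm v (x (j + M))
      rwa [hvn, one_mul] at this
    have : ⟪v, x (j + M)⟫ ^ 2 ≤ ‖x (j + M)‖ ^ 2 := by
      rw [← sq_abs]
      exact pow_le_pow_left₀ (abs_nonneg _) hcs 2
    simpa [hh, if_pos hjM] using this
  have : A < A := by
    calc A ≤ ∑' j, ⟪v, x j⟫ ^ 2 := hA1
    _ = ∑' j, ⟪v, x (j + M)⟫ ^ 2 := by rw [← hsplit, hzero, zero_add]
    _ ≤ ∑' j, h (j + M) := hle2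
    _ < A := hM
  exact lt_irrefl A this


theorem frame_subsequence_almost_orthonormal'
    {H : Type*} [NormedAddCommGroup H] [InnerProductSpace ℝ H] [CompleteSpace H]
    (hinf : ¬ FiniteDimensional ℝ H)
    (x : ℕ → H) (A B : ℝ) (hA : 0 < A) (hAB : A ≤ B)
    (hframe : ∀ v : H,
      A * ‖v‖ ^ 2 ≤ ∑' j, ⟪v, x j⟫ ^ 2 ∧ ∑' j, ⟪v, x j⟫ ^ 2 ≤ B * ‖v‖ ^ 2)
    (hx : ∀ j, x j ≠ 0) :
    ∀ ε : ℝ, 0 < ε → ε ≤ 1 → ∃ s : ℕ → ℕ, StrictMono s ∧ ∀ c : ℕ →₀ ℝ,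
      (1 - ε) * Real.sqrt (∑ k ∈ c.support, c k ^ 2) ≤
          ‖∑ k ∈ c.support, c k • (‖x (s k)‖⁻¹ • x (s k))‖ ∧
      ‖∑ k ∈ c.support, c k • (‖x (s k)‖⁻¹ • x (s k))‖ ≤
          (1 + ε) * Real.sqrt (∑ k ∈ c.support, c k ^ 2) := by
  intro ε hε hε1
  set z : ℕ → H := fun j => ‖x j‖⁻¹ • x j with hzdef
  have hz : ∀ j, ‖z j‖ = 1 := by
    intro j
    rw [hzdef]
    simp only [norm_smul, norm_inv, norm_norm]
    exact inv_mul_cancel₀ (norm_ne_zero_iff.mpr (hx j))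
  set δ : ℕ → ℝ := fun k => ε * (2:ℝ)⁻¹ ^ (k + 2) with hδdef
  have hδpos : ∀ k, 0 < δ k := fun k => by rw [hδdef]; positivity
  have hδle : ∀ k, δ k ≤ 4⁻¹ := by
    intro k
    rw [hδdef]
    have h1 : ((2:ℝ)⁻¹) ^ (k + 2) ≤ 2⁻¹ ^ (0 + 2) := by
      apply pow_le_pow_of_le_one (by norm_num) (by norm_num)
      omega
    calc ε * (2:ℝ)⁻¹ ^ (k + 2) ≤ 1 * (2:ℝ)⁻¹ ^ (0 + 2) := by
          apply mul_le_mul hε1 h1 (by positivity) (by norm_num)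
    _ = 4⁻¹ := by norm_num
  -- existence of the next index
  have keyz : ∀ (k N : ℕ) (e : ℕ → H), ∃ j, N ≤ j ∧
      ∑ i ∈ Finset.range k, ⟪e i, z j⟫ ^ 2 ≤ δ k ^ 2 := by
    intro k N e
    obtain ⟨j, hjN, hj⟩ := frame_aux_key hinf x A B hA hframe e k N (δ k ^ 2)
      (by positivity)
    refine ⟨j, hjN, ?_⟩
    have hxj : ‖x j‖ ≠ 0 := norm_ne_zero_iff.mpr (hx j)
    have hzi : ∀ i, ⟪e i, z j⟫ = ‖x j‖⁻¹ * ⟪e i, x j⟫ := by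
      intro i
      rw [hzdef]
      exact real_inner_smul_right _ _ _
    calc ∑ i ∈ Finset.range k, ⟪e i, z j⟫ ^ 2
        = (‖x j‖⁻¹) ^ 2 * ∑ i ∈ Finset.range k, ⟪e i, x j⟫ ^ 2 := by
          rw [Finset.mul_sum]
          exact Finset.sum_congr rfl fun i _ => by rw [hzi i]; ring
    _ ≤ (‖x j‖⁻¹) ^ 2 * (δ k ^ 2 * ‖x j‖ ^ 2) :=
          mul_le_mul_of_nonneg_left hj (by positivity)
    _ = δ k ^ 2 := by field_simp
  -- the Gram–Schmidt style recursion
  set wv : (ℕ → H) → ℕ → ℕ → H :=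
    fun f k j => z j - ∑ i ∈ Finset.range k, ⟪f i, z j⟫ • f i with hwv
  set step : ℕ → ℕ × (ℕ → H) → ℕ × (ℕ → H) := fun k st =>
    ((keyz (k + 1) (st.1 + 1) st.2).choose,
      Function.update st.2 (k + 1)
        (‖wv st.2 (k + 1) ((keyz (k + 1) (st.1 + 1) st.2).choose)‖⁻¹ •
          wv st.2 (k + 1) ((keyz (k + 1) (st.1 + 1) st.2).choose))) with hstepdef
  set init : ℕ × (ℕ → H) :=
    ((keyz 0 0 (fun _ => 0)).choose,
      Function.update (fun _ => (0:H)) 0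
        (‖wv (fun _ => 0) 0 ((keyz 0 0 (fun _ => 0)).choose)‖⁻¹ •
          wv (fun _ => 0) 0 ((keyz 0 0 (fun _ => 0)).choose))) with hinitdef
  set S : ℕ → ℕ × (ℕ → H) :=
    fun k => Nat.rec (motive := fun _ => ℕ × (ℕ → H)) init step k with hSdef
  set s : ℕ → ℕ := fun k => (S k).1 with hsdef
  set e : ℕ → H := fun k => (S k).2 k with hedef
  have hupdate : ∀ k, (S (k + 1)).2 = Function.update (S k).2 (k + 1)
      (‖wv (S k).2 (k + 1) (s (k + 1))‖⁻¹ • wv (S k).2 (k + 1) (s (k + 1))) :=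
    fun k => rfl
  have hspec : ∀ k, (s k + 1 ≤ s (k + 1)) ∧
      ∑ i ∈ Finset.range (k + 1), ⟪(S k).2 i, z (s (k + 1))⟫ ^ 2 ≤ δ (k + 1) ^ 2 :=
    fun k => (keyz (k + 1) (s k + 1) ((S k).2)).choose_spec
  have he0 : e 0 = z (s 0) := by
    show (S 0).2 0 = z (s 0)
    have h0 : (S 0).2 = Function.update (fun _ => (0:H)) 0
        (‖wv (fun _ => 0) 0 (s 0)‖⁻¹ • wv (fun _ => 0) 0 (s 0)) := rfl
    have hw0 : wv (fun _ => (0:H)) 0 (s 0) = z (s 0) := by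
      rw [hwv]; simp
    rw [h0, Function.update_self, hw0, hz (s 0)]
    simp
  -- the main invariant
  have hInv : ∀ k, (∀ i ≤ k, (S k).2 i = e i) ∧
      (∀ i ≤ k, ∀ i' ≤ k, ⟪e i, e i'⟫ = if i = i' then 1 else 0) ∧
      ‖z (s k) - e k‖ ≤ 2 * δ k := by
    intro k
    induction k with
    | zero =>
      refine ⟨?_, ?_, ?_⟩
      · intro i hi
        interval_cases i
        rfl
      · intro i hi i' hi'
        interval_cases i
        interval_cases i'
        rw [he0, if_pos rfl, real_inner_self_eq_norm_sq, hz]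
        norm_num
      · rw [he0]
        simp only [sub_self, norm_zero]
        positivity
    | succ k ih =>
      obtain ⟨hstab, horth, _⟩ := ih
      set j : ℕ := s (k + 1) with hj
      set w : H := wv (S k).2 (k + 1) j with hwdef
      have hw0 : w = z j - ∑ i ∈ Finset.range (k + 1), ⟪(S k).2 i, z j⟫ • (S k).2 i := rfl
      have hw : w = z j - ∑ i ∈ Finset.range (k + 1), ⟪e i, z j⟫ • e i := by
        rw [hw0]
        congr 1
        refine Finset.sum_congr rfl fun i hi => ?_
        have hik : i ≤ k := by
          have := Finset.mem_range.mp hi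
          omega
        rw [hstab i hik]
      set q : H := ∑ i ∈ Finset.range (k + 1), ⟪e i, z j⟫ • e i with hqdef
      set p : ℝ := ∑ i ∈ Finset.range (k + 1), ⟪e i, z j⟫ ^ 2 with hpdef
      have hppos : 0 ≤ p := Finset.sum_nonneg fun i _ => sq_nonneg _
      have hp : p ≤ δ (k + 1) ^ 2 := by
        rw [hpdef]
        have := (hspec k).2
        calc ∑ i ∈ Finset.range (k + 1), ⟪e i, z j⟫ ^ 2
            = ∑ i ∈ Finset.range (k + 1), ⟪(S k).2 i, z j⟫ ^ 2 := by
              refine Finset.sum_congr rfl fun i hi => ?_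
              have hik : i ≤ k := by
                have := Finset.mem_range.mp hi
                omega
              rw [hstab i hik]
        _ ≤ δ (k + 1) ^ 2 := this
      have hple : p ≤ 16⁻¹ := by
        have h1 := hδle (k + 1)
        have h2 := (hδpos (k + 1)).le
        nlinarith
      have hq_inner : ∀ i ∈ Finset.range (k + 1), ⟪e i, q⟫ = ⟪e i, z j⟫ := by
        intro i hi
        have hik : i ≤ k := by
          have := Finset.mem_range.mp hi
          omega
        rw [hqdef, inner_sum]
        have hterm : ∀ i' ∈ Finset.range (k + 1),
            ⟪e i, ⟪e i', z j⟫ • e i'⟫ = if i = i' then ⟪e i', z j⟫ else 0 := by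
          intro i' hi'
          have hik' : i' ≤ k := by
            have := Finset.mem_range.mp hi'
            omega
          rw [real_inner_smul_right, horth i hik i' hik']
          split <;> ring
        rw [Finset.sum_congr rfl hterm, Finset.sum_ite_eq]
        rw [if_pos hi]
      have hqw : ∀ i ∈ Finset.range (k + 1), ⟪e i, w⟫ = 0 := by
        intro i hi
        rw [hw, inner_sub_right, hq_inner i hi, sub_self]
      have hqw0 : ⟪q, w⟫ = 0 := by
        rw [hqdef, sum_inner]
        refine Finset.sum_eq_zero fun i hi => ?_
        rw [real_inner_smul_left, hqw i hi]
        ring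
      have hzq : ⟪z j, q⟫ = p := by
        rw [hqdef, hpdef, inner_sum]
        refine Finset.sum_congr rfl fun i hi => ?_
        rw [real_inner_smul_right, real_inner_comm]
        ring
      have hww : ⟪w, w⟫ = 1 - p := by
        have h1 : ⟪w, w⟫ = ⟪z j, w⟫ - ⟪q, w⟫ := by
          rw [hw, inner_sub_left]
        have h2 : ⟪z j, w⟫ = 1 - p := by
          rw [hw, inner_sub_right, hzq, real_inner_self_eq_norm_sq, hz]
          norm_num
        rw [h1, h2, hqw0, sub_zero]
      have hnw2 : ‖w‖ ^ 2 = 1 - p := by rw [← real_inner_self_eq_norm_sq, hww]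
      have hnwpos : 0 < ‖w‖ := by nlinarith [norm_nonneg w]
      have hnwle1 : ‖w‖ ≤ 1 := by nlinarith [norm_nonneg w]
      have hnwne : ‖w‖ ≠ 0 := ne_of_gt hnwpos
      have henew : e (k + 1) = ‖w‖⁻¹ • w := by
        show (S (k + 1)).2 (k + 1) = ‖w‖⁻¹ • w
        rw [hupdate k, Function.update_self]
      have hstab' : ∀ i ≤ k + 1, (S (k + 1)).2 i = e i := by
        intro i hi
        rcases Nat.lt_or_ge i (k + 1) with hlt | hge
        · have hik : i ≤ k := by omega
          rw [hupdate k, Function.update_of_ne (by omega : i ≠ k + 1)]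
          exact hstab i hik
        · have : i = k + 1 := by omega
          subst this
          rfl
      have hinner_new : ∀ i ≤ k, ⟪e i, e (k + 1)⟫ = 0 := by
        intro i hi
        rw [henew, real_inner_smul_right, hqw i (Finset.mem_range.mpr (by omega)), mul_zero]
      have horth' : ∀ i ≤ k + 1, ∀ i' ≤ k + 1, ⟪e i, e i'⟫ = if i = i' then 1 else 0 := by
        intro i hi i' hi'
        rcases Nat.lt_or_ge i (k + 1) with h1 | h1 <;> rcases Nat.lt_or_ge i' (k + 1) with h2 | h2
        · exact horth i (by omega) i' (by omega)
        · have : i' = k + 1 := by omega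
          subst this
          rw [hinner_new i (by omega), if_neg (by omega)]
        · have : i = k + 1 := by omega
          subst this
          rw [real_inner_comm, hinner_new i' (by omega), if_neg (by omega)]
        · have h3 : i = k + 1 := by omega
          have h4 : i' = k + 1 := by omega
          subst h3; subst h4
          rw [if_pos rfl, henew, real_inner_smul_left, real_inner_smul_right, hww]
          field_simp
          nlinarith
      refine ⟨hstab', horth', ?_⟩
      -- the distance estimate
      have hnq2 : ‖q‖ ^ 2 = p := by
        have hqz : q = z j - w := by rw [hw]; abel
        have : ⟪q, q⟫ = ⟪q, z j⟫ - ⟪q, w⟫ := by rw [← inner_sub_right, ← hqz]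
        rw [← real_inner_self_eq_norm_sq, this, hqw0, sub_zero, real_inner_comm, hzq]
      have hnq : ‖q‖ ≤ δ (k + 1) := by
        nlinarith [norm_nonneg q, (hδpos (k + 1)).le]
      have hsplit : z j - e (k + 1) = q + (w - e (k + 1)) := by
        rw [hw]
        abel
      have hwe : ‖w - e (k + 1)‖ = 1 - ‖w‖ := by
        rw [henew]
        have h5 : w - ‖w‖⁻¹ • w = (1 - ‖w‖⁻¹) • w := by
          rw [sub_smul, one_smul]
        rw [h5, norm_smul, Real.norm_eq_abs]
        have h6 : (1:ℝ) ≤ ‖w‖⁻¹ := (one_le_inv₀ hnwpos).2 hnwle1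
        rw [abs_of_nonpos (by linarith)]
        field_simp
        ring
      have hdist : ‖z j - e (k + 1)‖ ≤ 2 * δ (k + 1) := by
        calc ‖z j - e (k + 1)‖ ≤ ‖q‖ + ‖w - e (k + 1)‖ := by
              rw [hsplit]; exact norm_add_le _ _
        _ = ‖q‖ + (1 - ‖w‖) := by rw [hwe]
        _ ≤ δ (k + 1) + p := by
              have : 1 - ‖w‖ ≤ p := by nlinarith
              linarith
        _ ≤ 2 * δ (k + 1) := by
              have h1 := hδle (k + 1)
              have h2 := (hδpos (k + 1)).le
              nlinarith
      exact hdist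
  -- strict monotonicity
  have hsmono : StrictMono s := strictMono_nat_of_lt_succ fun k => (hspec k).1
  -- orthonormality of the full family
  have horthall : Orthonormal ℝ e := by
    rw [orthonormal_iff_ite]
    intro i i'
    exact (hInv (max i i')).2.1 i (le_max_left _ _) i' (le_max_right _ _)
  -- closeness
  have hclose : ∀ k, ‖z (s k) - e k‖ ≤ ε * (2:ℝ)⁻¹ ^ (k + 1) := by
    intro k
    have := (hInv k).2.2
    calc ‖z (s k) - e k‖ ≤ 2 * δ k := this
    _ = ε * (2:ℝ)⁻¹ ^ (k + 1) := by
        rw [hδdef]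
        ring
  refine ⟨s, hsmono, ?_⟩
  intro c
  set F := c.support with hF
  set R := Real.sqrt (∑ k ∈ F, c k ^ 2) with hR
  have hsumnn : 0 ≤ ∑ k ∈ F, c k ^ 2 := Finset.sum_nonneg fun k _ => sq_nonneg _
  have hR2 : R ^ 2 = ∑ k ∈ F, c k ^ 2 := Real.sq_sqrt hsumnn
  have hRnn : 0 ≤ R := Real.sqrt_nonneg _
  have hzz : ∀ k, c k • (‖x (s k)‖⁻¹ • x (s k)) = c k • z (s k) := fun k => rfl
  simp only [hzz]
  set u : H := ∑ k ∈ F, c k • z (s k) with hu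
  set v : H := ∑ k ∈ F, c k • e k with hv
  have hvnorm : ‖v‖ = R := by
    have h1 : ⟪v, v⟫ = ∑ k ∈ F, c k ^ 2 := by
      rw [hv, horthall.inner_sum c c F]
      refine Finset.sum_congr rfl fun k _ => ?_
      simp [sq]
    have h2 : ‖v‖ ^ 2 = ∑ k ∈ F, c k ^ 2 := by
      rw [← real_inner_self_eq_norm_sq, h1]
    rw [hR]
    rw [← h2, Real.sqrt_sq (norm_nonneg v)]
  have hdiff : ‖u - v‖ ≤ ε * R := by
    have h1 : u - v = ∑ k ∈ F, c k • (z (s k) - e k) := by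
      rw [hu, hv, ← Finset.sum_sub_distrib]
      refine Finset.sum_congr rfl fun k _ => ?_
      rw [smul_sub]
    have hck : ∀ k ∈ F, |c k| ≤ R := by
      intro k hk
      have h2 : c k ^ 2 ≤ ∑ i ∈ F, c i ^ 2 :=
        Finset.single_le_sum (fun i _ => sq_nonneg (c i)) hk
      have h3 : |c k| = Real.sqrt (c k ^ 2) := (Real.sqrt_sq_eq_abs _).symm
      rw [h3, hR]
      exact Real.sqrt_le_sqrt h2
    have hgeo : ∑ k ∈ F, ((2:ℝ)⁻¹) ^ (k + 1) ≤ 1 := by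
      have hsummable : Summable (fun k : ℕ => ((2:ℝ)⁻¹) ^ (k + 1)) := by
        apply Summable.congr ((summable_geometric_of_lt_one (by norm_num)
          (by norm_num : (2:ℝ)⁻¹ < 1)).mul_left 2⁻¹)
        intro k
        ring
      have htsum : ∑' k : ℕ, ((2:ℝ)⁻¹) ^ (k + 1) = 1 := by
        have hg : ∑' k : ℕ, ((2:ℝ)⁻¹) ^ k = 2 := by
          rw [tsum_geometric_of_lt_one (by norm_num) (by norm_num)]
          norm_num
        calc ∑' k : ℕ, ((2:ℝ)⁻¹) ^ (k + 1)
            = ∑' k : ℕ, 2⁻¹ * ((2:ℝ)⁻¹) ^ k := tsum_congr fun k => by ring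
        _ = 2⁻¹ * ∑' k : ℕ, ((2:ℝ)⁻¹) ^ k := tsum_mul_left
        _ = 1 := by rw [hg]; norm_num
      calc ∑ k ∈ F, ((2:ℝ)⁻¹) ^ (k + 1) ≤ ∑' k : ℕ, ((2:ℝ)⁻¹) ^ (k + 1) :=
            Summable.sum_le_tsum F (fun i _ => by positivity) hsummable
      _ = 1 := htsum
    calc ‖u - v‖ ≤ ∑ k ∈ F, ‖c k • (z (s k) - e k)‖ := by
          rw [h1]; exact norm_sum_le _ _
    _ ≤ ∑ k ∈ F, R * (ε * ((2:ℝ)⁻¹) ^ (k + 1)) := by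
          refine Finset.sum_le_sum fun k hk => ?_
          rw [norm_smul, Real.norm_eq_abs]
          have h4 := hclose k
          have h5 := hck k hk
          have h6 : (0:ℝ) ≤ ε * ((2:ℝ)⁻¹) ^ (k + 1) := by positivity
          have h7 : 0 ≤ ‖z (s k) - e k‖ := norm_nonneg _
          have h8 : 0 ≤ |c k| := abs_nonneg _
          nlinarith
    _ = R * ε * ∑ k ∈ F, ((2:ℝ)⁻¹) ^ (k + 1) := by
          rw [Finset.mul_sum]
          refine Finset.sum_congr rfl fun k _ => by ring
    _ ≤ R * ε * 1 := by
          apply mul_le_mul_of_nonneg_left hgeo (by positivity)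
    _ = ε * R := by ring
  constructor
  · have h1 : ‖v‖ ≤ ‖u‖ + ‖u - v‖ := by
      calc ‖v‖ = ‖u - (u - v)‖ := by congr 1; abel
      _ ≤ ‖u‖ + ‖u - v‖ := norm_sub_le _ _
    rw [hvnorm] at h1
    have := hdiff
    nlinarith
  · have h1 : ‖u‖ ≤ ‖v‖ + ‖u - v‖ := by
      calc ‖u‖ = ‖v + (u - v)‖ := by congr 1; abel
      _ ≤ ‖v‖ + ‖u - v‖ := norm_add_le _ _
    rw [hvnorm] at h1
    nlinarith


/-- Every frame (with nonzero elements) in an infinite-dimensional Hilbert space contains,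
for each `ε > 0`, a subsequence whose normalizations `z k = x (s k) / ‖x (s k)‖` are
`(1-ε, 1+ε)`-equivalent to an orthonormal basis of `ℓ₂`. -/
theorem frame_subsequence_almost_orthonormal
    {H : Type*} [NormedAddCommGroup H] [InnerProductSpace ℝ H] [CompleteSpace H]
    (hinf : ¬ FiniteDimensional ℝ H)
    (x : ℕ → H) (A B : ℝ) (hA : 0 < A) (hAB : A ≤ B)
    (hframe : ∀ v : H,
      A * ‖v‖ ^ 2 ≤ ∑' j, ⟪v, x j⟫ ^ 2 ∧ ∑' j, ⟪v, x j⟫ ^ 2 ≤ B * ‖v‖ ^ 2)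
    (hx : ∀ j, x j ≠ 0) :
    ∀ ε : ℝ, 0 < ε → ∃ s : ℕ → ℕ, StrictMono s ∧ ∀ c : ℕ →₀ ℝ,
      (1 - ε) * Real.sqrt (∑ k ∈ c.support, c k ^ 2) ≤
          ‖∑ k ∈ c.support, c k • (‖x (s k)‖⁻¹ • x (s k))‖ ∧
      ‖∑ k ∈ c.support, c k • (‖x (s k)‖⁻¹ • x (s k))‖ ≤
          (1 + ε) * Real.sqrt (∑ k ∈ c.support, c k ^ 2) := by
  intro ε hε
  obtain ⟨s, hs, hc⟩ := frame_subsequence_almost_orthonormal' hinf x A B hA hAB hframe hx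
    (min ε 1) (lt_min hε one_pos) (min_le_right _ _)
  refine ⟨s, hs, fun c => ?_⟩
  obtain ⟨h1, h2⟩ := hc c
  have hmin : min ε 1 ≤ ε := min_le_left _ _
  have hsq : 0 ≤ Real.sqrt (∑ k ∈ c.support, c k ^ 2) := Real.sqrt_nonneg _
  constructor
  · calc (1 - ε) * Real.sqrt (∑ k ∈ c.support, c k ^ 2)
        ≤ (1 - min ε 1) * Real.sqrt (∑ k ∈ c.support, c k ^ 2) := by nlinarith
    _ ≤ _ := h1
  · calc ‖∑ k ∈ c.support, c k • (‖x (s k)‖⁻¹ • x (s k))‖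
        ≤ (1 + min ε 1) * Real.sqrt (∑ k ∈ c.support, c k ^ 2) := h2
    _ ≤ (1 + ε) * Real.sqrt (∑ k ∈ c.support, c k ^ 2) := by nlinarith
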